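/- Let S be a commutative semigroup, p a prime, and R a commutative unitary ring of characteristic p. For any periodic element b of S whose period 𝒫(b) is a power of p, one has (X^b − X^{e(b)})^{ρ(b)} = 0 in the semigroup ring R[X;S]. -/

import Mathlib

namespace ZS

variable (S : Type*) [AddCommSemigroup S]

/-- `nsmul' n x = (n+1)·x`, iterated addition in a semigroup. -/
def nsmul' : ℕ → S → S
  | 0, x => x
  | n + 1, x => x + nsmul' n x

/-- The cyclic subsemigroup `⟨x⟩ = {x, 2x, 3x, …}` generated by `x`. -/
def cyc (x : S) : Set S := Set.range fun n => nsmul' S n x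

/-- `x` is periodic if `⟨x⟩` is finite. -/
def IsPeriodicElem (x : S) : Prop := (cyc S x).Finite

/-- A semigroup is periodic if every element is periodic. -/
def IsPeriodicSemigroup : Prop := ∀ x : S, IsPeriodicElem S x

/-- `ρ(x)`: the least `m ≥ 1` such that `m·x` is idempotent (equivalently `m·x = e(x)`). -/
noncomputable def rho (x : S) : ℕ :=
  sInf {n : ℕ | nsmul' S n x + nsmul' S n x = nsmul' S n x} + 1

/-- `e(x)`: the unique idempotent of the finite cyclic semigroup `⟨x⟩`. -/
noncomputable def eIdem (x : S) : S :=
  nsmul' S (sInf {n : ℕ | nsmul' S n x + nsmul' S n x = nsmul' S n x}) x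

/-- The period of a (periodic) element `x`: the least `n > 0` with `(m+n)x = mx` for some `m`. -/
noncomputable def period (x : S) : ℕ :=
  sInf {n : ℕ | 0 < n ∧ ∃ m : ℕ, nsmul' S (m + n) x = nsmul' S m x}

/-- The index of a (periodic) element `x`: the least `k ≥ 1` with `kx = tx` for some `t ≠ k`. -/
noncomputable def indexOf (x : S) : ℕ :=
  sInf {k : ℕ | ∃ t : ℕ, t ≠ k ∧ nsmul' S k x = nsmul' S t x} + 1

/-- `exp(S)`: the lcm of the periods of the elements of `S`, described as the least positive
common multiple of all the periods. -/
noncomputable def expS : ℕ := sInf {n : ℕ | 0 < n ∧ ∀ x : S, period S x ∣ n}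

/-- `K` is a splitting field for exponent `n`: it contains exactly `n` `n`-th roots of unity. -/
def SplitField (K : Type*) [Field K] (n : ℕ) : Prop := Set.ncard {ζ : K | ζ ^ n = 1} = n

/-- Green's preorder `a ≼_𝓗 b`. -/
def gLe (a b : S) : Prop := a = b ∨ ∃ c : S, a = b + c

/-- Green's congruence `a 𝓗 b`. -/
def gEq (a b : S) : Prop := gLe S a b ∧ gLe S b a

/-- `a ≺_𝓗 b`. -/
def gLt (a b : S) : Prop := gLe S a b ∧ ¬ gLe S b a

/-- The Green class `H_a`. -/
def HClass (a : S) : Set S := {x : S | gEq S x a}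

/-- The stabilizer `St(H_a)` of the Green class of `a`. -/
def stab (a : S) : Set S := {c : S | ∀ x ∈ HClass S a, c + x ∈ HClass S a}

theorem gLe_trans {a b c : S} (h1 : gLe S a b) (h2 : gLe S b c) : gLe S a c := by
  rcases h1 with rfl | ⟨u, rfl⟩
  · exact h2
  · rcases h2 with rfl | ⟨v, rfl⟩
    · exact Or.inr ⟨u, rfl⟩
    · exact Or.inr ⟨v + u, by rw [add_assoc]⟩

theorem gLe_add_right {a b : S} (x : S) (h : gLe S a b) : gLe S (a + x) (b + x) := by
  rcases h with rfl | ⟨c, rfl⟩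
  · exact Or.inl rfl
  · exact Or.inr ⟨c, by rw [add_right_comm]⟩

theorem gEq_add {w x y z : S} (h1 : gEq S w x) (h2 : gEq S y z) : gEq S (w + y) (x + z) := by
  have k1 : gLe S (w + y) (x + y) := gLe_add_right S y h1.1
  have k2 : gLe S (x + y) (x + z) := by
    have h := gLe_add_right S x h2.1
    rwa [add_comm z x, add_comm y x] at h
  have k3 : gLe S (x + z) (w + z) := gLe_add_right S z h1.2
  have k4 : gLe S (w + z) (w + y) := by
    have h := gLe_add_right S w h2.2
    rwa [add_comm z w, add_comm y w] at h
  exact ⟨gLe_trans S k1 k2, gLe_trans S k3 k4⟩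

/-- Green's congruence as an additive congruence. -/
def greenCon : AddCon S where
  r a b := gEq S a b
  iseqv := ⟨fun _ => ⟨Or.inl rfl, Or.inl rfl⟩, fun h => ⟨h.2, h.1⟩,
    fun h1 h2 => ⟨gLe_trans S h1.1 h2.1, gLe_trans S h2.2 h1.2⟩⟩
  add' h1 h2 := gEq_add S h1 h2

/-- The quotient semigroup `S/𝓗`. -/
abbrev GQuot := (greenCon S).Quotient

/-- The canonical epimorphism `S → S/𝓗`, `a ↦ ā`. -/
def gq (a : S) : GQuot S := (a : (greenCon S).Quotient)

/-- The sum of a sequence (multiset) of elements of `S`, computed in `WithZero S`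
(the empty sequence having sum the adjoined zero). -/
def msum (T : Multiset S) : WithZero S := (T.map fun x => (x : WithZero S)).sum

/-- A sequence over a commutative semigroup is (additively) reducible if some proper
(possibly empty) subsequence has the same sum; the empty sequence has sum the identity of `S`,
when `S` has one. -/
def IsReducible (T : Multiset S) : Prop :=
  (∃ T' : Multiset S, T' ≤ T ∧ T' ≠ T ∧ T' ≠ 0 ∧ msum S T' = msum S T) ∨
    (T ≠ 0 ∧ ∃ z : S, msum S T = ↑z ∧ ∀ s : S, z + s = s)

/-- The Davenport constant `D(S)` of a commutative semigroup. -/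
noncomputable def Dav : ℕ∞ :=
  sInf {n : ℕ∞ | ∀ T : Multiset S, (T.card : ℕ∞) ≥ n → IsReducible S T}

/-- The relative Davenport constant `D_a(S)`: the largest length of an additively
irreducible sequence with sum `a`. -/
noncomputable def Drel (a : S) : ℕ∞ :=
  sSup {n : ℕ∞ | ∃ T : Multiset S,
    T ≠ 0 ∧ ¬ IsReducible S T ∧ msum S T = ↑a ∧ n = (T.card : ℕ∞)}

/-- The Erdős–Burgess constant `I(S)`: the smallest `ℓ` such that every sequence over `S` of
length (at least) `ℓ` has a nonempty subsequence with idempotent sum. -/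
noncomputable def EB : ℕ∞ :=
  sInf {n : ℕ∞ | ∀ T : Multiset S, (T.card : ℕ∞) ≥ n →
    ∃ T' : Multiset S, T' ≤ T ∧ T' ≠ 0 ∧ ∃ x : S, msum S T' = ↑x ∧ x + x = x}

/-- The Davenport constant of a (semigroup which is a) group: the smallest `ℓ` such that every
sequence of length (at least) `ℓ` has a nonempty subsequence whose sum is the identity element. -/
noncomputable def DavGrpSet : ℕ∞ :=
  sInf {n : ℕ∞ | ∀ T : Multiset S, (T.card : ℕ∞) ≥ n →
    ∃ T' : Multiset S, T' ≤ T ∧ T' ≠ 0 ∧ ∃ z : S, msum S T' = ↑z ∧ ∀ x : S, z + x = x}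

/-- The Davenport constant of a finite abelian group. -/
noncomputable def DavG (G : Type*) [AddCommMonoid G] : ℕ∞ :=
  sInf {n : ℕ∞ | ∀ T : Multiset G, (T.card : ℕ∞) ≥ n →
    ∃ T' : Multiset G, T' ≤ T ∧ T' ≠ 0 ∧ T'.sum = 0}

/-- `ψ(a)`: the largest length of a strictly ascending chain of principal ideals starting at
`(a)`. -/
noncomputable def psi (a : S) : ℕ∞ :=
  sSup {n : ℕ∞ | ∃ ℓ : ℕ, n = (ℓ : ℕ∞) ∧
    ∃ c : ℕ → S, c 0 = a ∧ ∀ i < ℓ, gLt S (c i) (c (i + 1))}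

/-- `Ψ(S)`: the largest length of a strictly ascending chain of principal ideals of `S`. -/
noncomputable def PsiS : ℕ∞ := ⨆ a : S, psi S a

/-- A subset of a semigroup which is a subgroup: closed under addition, with an identity
and inverses. -/
def IsSubgroupSet (T : Set S) : Prop :=
  (∀ x ∈ T, ∀ y ∈ T, x + y ∈ T) ∧
    ∃ z ∈ T, (∀ x ∈ T, z + x = x) ∧ ∀ x ∈ T, ∃ y ∈ T, x + y = z

open Classical in
/-- `ε_a`: `0` if `⟨a⟩` is a group, `1` otherwise. -/
noncomputable def eps (a : S) : ℕ∞ := if IsSubgroupSet S (cyc S a) then 0 else 1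

/-- The Schützenberger maps on the Green class `H_a`: maps `x ↦ c + x` for `c ∈ St(H_a)`. -/
def GammaSet (a : S) : Set (↥(HClass S a) → ↥(HClass S a)) :=
  {f | ∃ c ∈ stab S a, ∀ x : ↥(HClass S a), (↑(f x) : S) = c + ↑x}

/-- The Schützenberger group `Γ(H_a)` (as a type; it is empty when `St(H_a) = ∅`). -/
def Gamma (a : S) : Type _ := ↥(GammaSet S a)

instance (a : S) : Add (Gamma S a) :=
  ⟨fun f g => ⟨f.1 ∘ g.1, by
    obtain ⟨c, hc, hfc⟩ := f.2
    obtain ⟨d, hd, hgd⟩ := g.2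
    refine ⟨c + d, fun x hx => by rw [add_assoc]; exact hc _ (hd x hx), fun x => ?_⟩
    show (↑(f.1 (g.1 x)) : S) = c + d + ↑x
    rw [hfc (g.1 x), hgd x, add_assoc]⟩⟩

instance (a : S) : AddCommSemigroup (Gamma S a) where
  add_assoc f g h := Subtype.ext rfl
  add_comm f g := by
    obtain ⟨c, hc, hfc⟩ := f.2
    obtain ⟨d, hd, hgd⟩ := g.2
    apply Subtype.ext
    funext x
    apply Subtype.ext
    show (↑(f.1 (g.1 x)) : S) = ↑(g.1 (f.1 x))
    rw [hfc (g.1 x), hgd x, hgd (f.1 x), hfc x, add_left_comm]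

/-- `St(H_a)` as a subsemigroup of `S`. -/
def stabSub (a : S) : AddSubsemigroup S where
  carrier := stab S a
  add_mem' := fun {c d} hc hd x hx => by rw [add_assoc]; exact hc _ (hd x hx)

/-- The canonical surjection `π_a : St(H_a) → Γ(H_a)`, `c ↦ γ_c`. -/
def gammaMap (a : S) (c : ↥(stabSub S a)) : Gamma S a :=
  ⟨fun x => ⟨(↑c : S) + ↑x, c.2 ↑x x.2⟩, ⟨↑c, c.2, fun _ => rfl⟩⟩

/-- The semigroup algebra `R[X;S]` of a commutative semigroup, realized inside the monoid
algebra of the monoid obtained from `S` by adjoining an identity element. -/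
abbrev SAlg (R : Type*) [CommRing R] (S : Type*) [AddCommSemigroup S] :=
  AddMonoidAlgebra R (WithZero S)

/-- The monomial `r·X^s` of the semigroup algebra. -/
noncomputable def Xm (R : Type*) [CommRing R] {S : Type*} [AddCommSemigroup S] (s : S) (r : R) :
    SAlg R S := AddMonoidAlgebra.single (↑s) r

/-- The factor `X^s - a·X^{e(s)}` of the semigroup algebra. -/
noncomputable def facX (R : Type*) [CommRing R] {S : Type*} [AddCommSemigroup S]
    (s : S) (a : R) : SAlg R S := Xm R s 1 - Xm R (eIdem S s) a

/-- The invariant `d(S,R)`: the supremum of all `ℓ` such that some sequence `s_1,…,s_ℓ` over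
`S` satisfies `(X^{s_1} - a_1 X^{e(s_1)}) ⋯ (X^{s_ℓ} - a_ℓ X^{e(s_ℓ)}) ≠ 0` in `R[X;S]` for all
nonzero `a_1, …, a_ℓ ∈ R`. -/
noncomputable def dd (R : Type*) [CommRing R] (S : Type*) [AddCommSemigroup S] : ℕ∞ :=
  sSup {n : ℕ∞ | ∃ ℓ : ℕ, n = (ℓ : ℕ∞) ∧ ∃ s : Fin ℓ → S,
    ∀ a : Fin ℓ → R, (∀ i, a i ≠ 0) → ∏ i, facX R (s i) (a i) ≠ 0}

/-- `Λ(S)`: the minimum over all generating sets `A` of `S` of `1 + Σ_{a∈A} (ρ(a)-1)`. -/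
noncomputable def Lam (S : Type*) [AddCommSemigroup S] : ℕ :=
  sInf {n : ℕ | ∃ A : Finset S,
    AddSubsemigroup.closure (↑A : Set S) = ⊤ ∧ n = 1 + ∑ a ∈ A, (rho S a - 1)}

/-- An elementary semigroup: an ideal extension of a nilsemigroup `N` by a group with zero
`G ∪ {∞}`. -/
def IsElementary : Prop :=
  ∃ G N : Set S, G ∪ N = Set.univ ∧ Disjoint G N ∧ IsSubgroupSet S G ∧
    (∀ x ∈ N, ∀ s : S, s + x ∈ N) ∧
    ∃ z ∈ N, (∀ s : S, s + z = z) ∧ ∀ x ∈ N, ∃ n : ℕ, nsmul' S n x = z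



section Aux

lemma nsmul'_add_aux (b : S) (k : ℕ) : ∀ m : ℕ,
    nsmul' S (m + k + 1) b = nsmul' S m b + nsmul' S k b := by
  intro m
  induction m with
  | zero =>
    rw [Nat.zero_add]
    rfl
  | succ m ih =>
    have h : m + 1 + k + 1 = (m + k + 1) + 1 := by omega
    rw [h]
    show b + nsmul' S (m + k + 1) b = (b + nsmul' S m b) + nsmul' S k b
    rw [ih, add_assoc]

lemma per_up_aux (b : S) (m₀ k : ℕ) (h : nsmul' S (m₀ + k) b = nsmul' S m₀ b) :
    ∀ m, m₀ ≤ m → ∀ c : ℕ, nsmul' S (m + c * k) b = nsmul' S m b := by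
  have step : ∀ m, m₀ ≤ m → nsmul' S (m + k) b = nsmul' S m b := by
    intro m hm
    induction m, hm using Nat.le_induction with
    | base => exact h
    | succ m hm ih =>
      have h1 : m + 1 + k = (m + k) + 1 := by omega
      rw [h1]
      show b + nsmul' S (m + k) b = b + nsmul' S m b
      rw [ih]
  intro m hm c
  induction c with
  | zero => simp
  | succ c ih =>
    have h1 : m + (c + 1) * k = (m + c * k) + k := by ring
    rw [h1, step _ (hm.trans (Nat.le_add_right m (c * k))), ih]

end Aux

/-- `(X^b - X^{e(b)})^{ρ(b)} = 0` in characteristic `p` when the period of `b`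
is a power of `p`. -/
theorem stmt19 (S : Type*) [AddCommSemigroup S] (p : ℕ) (hp : p.Prime)
    (R : Type*) [CommRing R] [CharP R p]
    (b : S) (hb : IsPeriodicElem S b) (ht : ∃ t : ℕ, period S b = p ^ t) :
    (facX R b (1 : R)) ^ (rho S b) = 0 := by
  classical
  obtain ⟨t, hper⟩ := ht
  -- not injective
  have hrange : cyc S b = Set.range fun k : ℕ => nsmul' S k b := rfl
  have hninj : ¬ Function.Injective fun k : ℕ => nsmul' S k b := by
    intro hinj
    exact (Set.infinite_range_of_injective hinj) (hrange ▸ hb)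
  obtain ⟨i0, j0, hfe, hne⟩ := Function.not_injective_iff.mp hninj
  obtain ⟨i, j, hij, hfij⟩ : ∃ i j : ℕ, i < j ∧ nsmul' S i b = nsmul' S j b := by
    rcases lt_or_gt_of_ne hne with h | h
    · exact ⟨i0, j0, h, hfe⟩
    · exact ⟨j0, i0, h, hfe.symm⟩
  set d := j - i with hdj
  have hd : 0 < d := by omega
  have hper_d : nsmul' S (i + d) b = nsmul' S i b := by
    rw [show i + d = j by omega]; exact hfij.symm
  have P := per_up_aux S b i d hper_d
  -- idempotent set nonempty
  set iSet := {n : ℕ | nsmul' S n b + nsmul' S n b = nsmul' S n b} with hiSet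
  have hNmem : ((i + 1) * d - 1) ∈ iSet := by
    set N := (i + 1) * d - 1 with hNdef
    have hle : i + 1 ≤ (i + 1) * d := Nat.le_mul_of_pos_right _ hd
    have hN1 : N + 1 = (i + 1) * d := by omega
    have hNi : i ≤ N := by omega
    have h1 : nsmul' S (N + N + 1) b = nsmul' S N b + nsmul' S N b :=
      nsmul'_add_aux S b N N
    have h2 : nsmul' S (N + (i + 1) * d) b = nsmul' S N b := P N hNi (i + 1)
    show nsmul' S N b + nsmul' S N b = nsmul' S N b
    rw [← h1, show N + N + 1 = N + (N + 1) by omega, hN1, h2]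
  set M := sInf iSet with hMdef
  have hMidem : nsmul' S M b + nsmul' S M b = nsmul' S M b := Nat.sInf_mem ⟨_, hNmem⟩
  -- period facts
  set pSet := {n : ℕ | 0 < n ∧ ∃ m : ℕ, nsmul' S (m + n) b = nsmul' S m b} with hpSet
  have hpne : pSet.Nonempty := ⟨d, hd, i, hper_d⟩
  have hperiod : period S b = sInf pSet := rfl
  have hnmem : period S b ∈ pSet := by rw [hperiod]; exact Nat.sInf_mem hpne
  set n := period S b with hndef
  obtain ⟨hn0, m₀, hm₀⟩ := hnmem
  have Pn := per_up_aux S b m₀ n hm₀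
  -- rho periodicity
  have hMper : nsmul' S (M + (M + 1)) b = nsmul' S M b := by
    rw [show M + (M + 1) = M + M + 1 by omega, nsmul'_add_aux S b M M, hMidem]
  have PM := per_up_aux S b M (M + 1) hMper
  -- n divides M + 1
  have hdvd : n ∣ (M + 1) := by
    by_contra hnd
    set r := (M + 1) % n with hrdef
    have hr0 : 0 < r := Nat.pos_of_ne_zero (fun h => hnd (Nat.dvd_of_mod_eq_zero h))
    have hrlt : r < n := Nat.mod_lt _ hn0
    set m := max m₀ M with hmdef
    have h1 : nsmul' S (m + r + ((M + 1) / n) * n) b = nsmul' S (m + r) b :=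
      Pn (m + r) ((le_max_left m₀ M).trans (Nat.le_add_right m r)) _
    have h2 : m + r + ((M + 1) / n) * n = m + (M + 1) := by
      have h0 := Nat.div_add_mod (M + 1) n
      have hc : ((M + 1) / n) * n = n * ((M + 1) / n) := Nat.mul_comm _ _
      omega
    have h3 : nsmul' S (m + (M + 1)) b = nsmul' S m b := by
      have := PM m (le_max_right m₀ M) 1; rwa [one_mul] at this
    have hrper : nsmul' S (m + r) b = nsmul' S m b := by rw [← h1, h2, h3]
    have hrmem : r ∈ pSet := ⟨hr0, m, hrper⟩
    have hle : n ≤ r := Nat.sInf_le hrmem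
    omega
  obtain ⟨q, hq⟩ := hdvd
  have hq1 : 1 ≤ q :=
    Nat.pos_of_ne_zero (fun h => by rw [h, Nat.mul_zero] at hq; omega)
  -- key: f (M + n) = f M
  have hkey : nsmul' S (M + n) b = nsmul' S M b := by
    have e1 : nsmul' S (M + n + m₀ * (M + 1)) b = nsmul' S (M + n) b :=
      PM (M + n) (Nat.le_add_right M n) m₀
    have hm0le : m₀ ≤ M + m₀ * (M + 1) := by
      have : m₀ ≤ m₀ * (M + 1) := Nat.le_mul_of_pos_right _ (Nat.succ_pos M)
      omega
    have e2 : nsmul' S ((M + m₀ * (M + 1)) + 1 * n) b = nsmul' S (M + m₀ * (M + 1)) b :=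
      Pn (M + m₀ * (M + 1)) hm0le 1
    have e3 : nsmul' S (M + m₀ * (M + 1)) b = nsmul' S M b := PM M le_rfl m₀
    rw [← e1, show M + n + m₀ * (M + 1) = (M + m₀ * (M + 1)) + 1 * n by ring, e2, e3]
  -- algebra side
  haveI := Fact.mk hp
  have hrho : rho S b = M + 1 := by unfold rho; rw [hMdef, hiSet]
  have he : eIdem S b = nsmul' S M b := by unfold eIdem; rw [hMdef, hiSet]
  set A : SAlg R S := AddMonoidAlgebra.single (↑b) (1 : R) with hA
  set B : SAlg R S := AddMonoidAlgebra.single (↑(nsmul' S M b)) (1 : R) with hB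
  have hfac : facX R b 1 = A - B := by
    unfold facX Xm; rw [he]
  have hXmul : ∀ x y : S,
      (AddMonoidAlgebra.single (↑x) (1 : R) : SAlg R S) *
        (AddMonoidAlgebra.single (↑y) (1 : R) : SAlg R S) =
        (AddMonoidAlgebra.single (↑(x + y)) (1 : R) : SAlg R S) := by
    intro x y
    rw [AddMonoidAlgebra.single_mul_single, one_mul]
    rfl
  have hApow : ∀ k : ℕ, A ^ (k + 1) =
      AddMonoidAlgebra.single (↑(nsmul' S k b)) (1 : R) := by
    intro k
    induction k with
    | zero => rw [pow_one]; exact hA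
    | succ k ih =>
      rw [pow_succ, ih, hA, hXmul]
      have : nsmul' S k b + b = nsmul' S (k + 1) b := by
        rw [add_comm]; rfl
      rw [this]
  have hBB : B * B = B := by
    rw [hB, hXmul, hMidem]
  have hBpow : ∀ k : ℕ, B ^ (k + 1) = B := by
    intro k
    induction k with
    | zero => rw [pow_one]
    | succ k ih => rw [pow_succ, ih, hBB]
  set U : SAlg R S := A ^ n with hU
  have hUB : U * B = B := by
    rw [hU, show n = (n - 1) + 1 by omega, hApow, hB, hXmul,
      ← nsmul'_add_aux S b M (n - 1), show n - 1 + M + 1 = M + n by omega, hkey]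
  have hUq : U ^ q = B := by
    rw [hU, ← pow_mul, show n * q = M + 1 by omega, hApow, hB]
  have hUjB : ∀ j : ℕ, U ^ (j + 1) * B = B := by
    intro j
    induction j with
    | zero => rw [pow_one, hUB]
    | succ j ih => rw [pow_succ, mul_assoc, hUB, ih]
  have claim : ∀ j : ℕ, (U - B) ^ (j + 1) = U ^ (j + 1) - B := by
    intro j
    induction j with
    | zero => rw [pow_one, pow_one]
    | succ j ih =>
      calc (U - B) ^ (j + 1 + 1) = (U - B) ^ (j + 1) * (U - B) := pow_succ _ _
        _ = (U ^ (j + 1) - B) * (U - B) := by rw [ih]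
        _ = U ^ (j + 1) * U - U ^ (j + 1) * B - B * U + B * B := by ring
        _ = U ^ (j + 1) * U - B - B + B := by rw [hUjB, mul_comm B U, hUB, hBB]
        _ = U ^ (j + 1 + 1) - B := by rw [pow_succ]; ring
  haveI hCharP : CharP (SAlg R S) p := by
    have hinj : Function.Injective
        (AddMonoidAlgebra.singleZeroRingHom (R := R) (M := WithZero S)) := by
      intro x y hxy
      simpa using congrArg (fun g : SAlg R S => g.coeff 0) hxy
    exact charP_of_injective_ringHom hinj p
  have hsub : (A - B) ^ n = U - B := by
    rw [hper, hU, hper]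
    rw [sub_pow_char_pow A B t, ← hper, show n = (n - 1) + 1 by omega, hBpow]
  rw [hfac, hrho, show M + 1 = n * q by omega, pow_mul, hsub,
    show q = (q - 1) + 1 by omega, claim, ← show q = (q - 1) + 1 by omega, hUq, sub_self]


end ZS
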